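/- The polynomial f(x) = 100x⁵ + 230x⁴ + 80x³ + 164x² + 8x + 16 is stable (all zeros have negative real part), the polynomial g(x) = 6.17x⁵ + 6.4x⁴ + 8.96x³ + 6.62x² + 6.4x + 4.66 satisfies bᵢbᵢ₋₁ > bᵢ₋₂bᵢ₊₁ for i = 2,3,4, yet their Hadamard product 617x⁵ + 1472x⁴ + 716.8x³ + 1085.68x² + 51.2x + 74.56 is not stable. -/

import Mathlib

open Polynomial Complex

private lemma part1 : ∀ z : ℂ, 100 * z ^ 5 + 230 * z ^ 4 + 80 * z ^ 3 + 164 * z ^ 2 + 8 * z + 16 = 0 →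
    z.re < 0 := by
  intro z hz
  by_contra hx
  push_neg at hx
  set c : ℂ := (starRingEnd ℂ) z with hc
  have hzc : 100 * c ^ 5 + 230 * c ^ 4 + 80 * c ^ 3 + 164 * c ^ 2 + 8 * c + 16 = 0 := by
    have h := congrArg (starRingEnd ℂ) hz
    simpa [map_add, map_mul, map_pow, map_ofNat] using h
  set S : ℝ := ((82184618800443487 : ℝ)/2826589612236016) +
      ((529985552294253 : ℝ)/22283737830664) * Complex.normSq (((62217052111686 : ℂ)/176661850764751)*1 + z) +
      ((2785467228833 : ℝ)/172327180700) * Complex.normSq (((1595649482789 : ℂ)/5570934457666)*1 + ((4034075869106 : ℂ)/2785467228833)*z + z^2) +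
      ((1723271807 : ℝ)/966420) * Complex.normSq (((2334919141 : ℂ)/1723271807)*1 + ((1165100796 : ℂ)/1723271807)*z + ((3960428778 : ℂ)/1723271807)*z^2 + z^3) +
      ((241605 : ℝ)/16) * Complex.normSq (((10 : ℂ)/48321)*1 + ((36741 : ℂ)/26845)*z + ((18308 : ℂ)/26845)*z^2 + ((1111367 : ℂ)/483210)*z^3 + z^4) with hSdef
  set T : ℝ := 1 + Complex.normSq z + Complex.normSq (z^2) + Complex.normSq (z^3) +
      Complex.normSq (z^4) with hTdef
  have hS0 : 0 ≤ S := by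
    rw [hSdef]
    have h1 := Complex.normSq_nonneg (((62217052111686 : ℂ)/176661850764751)*1 + z)
    have h2 := Complex.normSq_nonneg (((1595649482789 : ℂ)/5570934457666)*1 + ((4034075869106 : ℂ)/2785467228833)*z + z^2)
    have h3 := Complex.normSq_nonneg (((2334919141 : ℂ)/1723271807)*1 + ((1165100796 : ℂ)/1723271807)*z + ((3960428778 : ℂ)/1723271807)*z^2 + z^3)
    have h4 := Complex.normSq_nonneg (((10 : ℂ)/48321)*1 + ((36741 : ℂ)/26845)*z + ((18308 : ℂ)/26845)*z^2 + ((1111367 : ℂ)/483210)*z^3 + z^4)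
    positivity
  have hT1 : 1 ≤ T := by
    rw [hTdef]
    have h1 := Complex.normSq_nonneg z
    have h2 := Complex.normSq_nonneg (z^2)
    have h3 := Complex.normSq_nonneg (z^3)
    have h4 := Complex.normSq_nonneg (z^4)
    linarith
  have key : ((2 * z.re : ℝ) : ℂ) * (S : ℂ) + (T : ℂ) = 0 := by
    have h2re : ((2 * z.re : ℝ) : ℂ) = z + c := (Complex.add_conj z).symm
    rw [h2re, hSdef, hTdef]
    push_cast [← Complex.mul_conj]
    simp only [map_add, map_mul, map_pow, map_one, map_ofNat, map_div₀, Complex.conj_conj]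
    rw [← hc]
    linear_combination ((((25 : ℂ)/8)*1 + ((330669 : ℂ)/16)*c + ((41193 : ℂ)/4)*c^2 + ((1111367 : ℂ)/32)*c^3 + ((241605 : ℂ)/16)*c^4)/100) * hz + ((((25 : ℂ)/8)*1 + ((330669 : ℂ)/16)*z + ((41193 : ℂ)/4)*z^2 + ((1111367 : ℂ)/32)*z^3 + ((241605 : ℂ)/16)*z^4)/100) * hzc
  have keyR : 2 * z.re * S + T = 0 := by exact_mod_cast key
  nlinarith [mul_nonneg (by linarith : (0:ℝ) ≤ 2 * z.re) hS0]

noncomputable def Q18 : Polynomial ℂ :=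
  X^5 + C (1472/617) * X^4 + C (7168/6170) * X^3 + C (108568/61700) * X^2 +
    C (512/6170) * X + C (7456/61700)

private lemma part3 : ¬ (∀ z : ℂ, 617 * z ^ 5 + 1472 * z ^ 4 + 716.8 * z ^ 3 + 1085.68 * z ^ 2 +
    51.2 * z + 74.56 = 0 → z.re < 0) := by
  intro h
  have hm : Q18.Monic := by unfold Q18; monicity!
  have hQ0 : Q18 ≠ 0 := hm.ne_zero
  have hdeg : Q18.natDegree = 5 := by unfold Q18; compute_degree!
  have hsplits : Q18.Splits := IsAlgClosed.splits Q18
  have hcard : Multiset.card Q18.roots = 5 := by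
    rw [← hdeg]; exact (Polynomial.splits_iff_card_roots.mp hsplits)
  set x0 : ℝ := ((31063504020511387331912669 : ℝ)/500000000000000000000000000000) with hx0def
  set y0 : ℝ := ((276825917986111286707639241781 : ℝ)/1000000000000000000000000000000) with hy0def
  have hx0pos : (0:ℝ) < x0 := by rw [hx0def]; norm_num
  set z0 : ℂ := (x0 : ℂ) + (y0 : ℂ) * Complex.I with hz0def
  have hroots : ∀ a ∈ Q18.roots, x0 ≤ ‖z0 - a‖ := by
    intro a ha
    have hev0 : Q18.eval a = 0 := (Polynomial.mem_roots'.mp ha).2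
    have hexp : a^5 + (1472/617 : ℂ)*a^4 + (7168/6170 : ℂ)*a^3 + (108568/61700 : ℂ)*a^2 +
        (512/6170 : ℂ)*a + (7456/61700 : ℂ) = 0 := by
      simpa [Q18, Polynomial.eval_add, Polynomial.eval_mul, Polynomial.eval_pow] using hev0
    have hre : a.re < 0 := by
      apply h a
      rw [show (716.8 : ℂ) = 7168/10 by norm_num, show (1085.68 : ℂ) = 108568/100 by norm_num,
        show (51.2 : ℂ) = 512/10 by norm_num, show (74.56 : ℂ) = 7456/100 by norm_num]
      linear_combination (617 : ℂ) * hexp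
    have h1 : x0 ≤ (z0 - a).re := by
      rw [Complex.sub_re, hz0def]
      simp only [Complex.add_re, Complex.ofReal_re, Complex.mul_re, Complex.ofReal_im,
        Complex.I_re, Complex.I_im]
      nlinarith
    calc x0 ≤ (z0 - a).re := h1
      _ ≤ ‖z0 - a‖ := by exact Complex.re_le_norm _
  have hfact : Q18 = (Q18.roots.map fun a => X - C a).prod :=
    hsplits.eq_prod_roots_of_monic hm
  have h1 : Q18.eval z0 = (Q18.roots.map fun a => z0 - a).prod := by
    conv_lhs => rw [hfact]
    rw [Polynomial.eval_multiset_prod, Multiset.map_map]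
    simp [Function.comp]
  have h2 : ‖Q18.eval z0‖₊ = (Q18.roots.map fun a => ‖z0 - a‖₊).prod := by
    rw [h1]
    have hmp := map_multiset_prod (nnnormHom (α := ℂ)) (Q18.roots.map fun a => z0 - a)
    rw [Multiset.map_map] at hmp
    simpa [Function.comp, nnnormHom] using hmp
  set X0 : NNReal := ⟨x0, hx0pos.le⟩ with hX0def
  have h3 : ∀ u ∈ Q18.roots.map fun a => ‖z0 - a‖₊, X0 ≤ u := by
    intro u hu
    obtain ⟨a, ha, rfl⟩ := Multiset.mem_map.mp hu
    rw [← NNReal.coe_le_coe]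
    exact hroots a ha
  have h4 := Multiset.pow_card_le_prod h3
  rw [Multiset.card_map, hcard, ← h2] at h4
  have key : x0^5 ≤ ‖Q18.eval z0‖ := by
    have := (NNReal.coe_le_coe).mpr h4
    push_cast at this
    exact this
  have hev : Q18.eval z0 = ((((268682223191419696930362500564274706817704545195414864839541734512392226534297668691618125193470670901086711388317324610673 : ℝ)/308500000000000000000000000000000000000000000000000000000000000000000000000000000000000000000000000000000000000000000000000000000000000000000000000000000) : ℝ) : ℂ) + ((((-326260746459416855996574970283864440636000172758036411556545730616491591777304226967034641481894311168630399146438258019403 : ℝ)/617000000000000000000000000000000000000000000000000000000000000000000000000000000000000000000000000000000000000000000000000000000000000000000000000000000) : ℝ) : ℂ) * Complex.I := by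
    simp only [Q18, Polynomial.eval_add, Polynomial.eval_mul, Polynomial.eval_pow,
      Polynomial.eval_X, Polynomial.eval_C, hz0def]
    rw [Complex.ext_iff]
    constructor <;>
      simp only [Complex.add_re, Complex.add_im, Complex.mul_re, Complex.mul_im,
        Complex.ofReal_re, Complex.ofReal_im, Complex.I_re, Complex.I_im] <;>
      norm_num [pow_succ, Complex.mul_re, Complex.mul_im, Complex.add_re, Complex.add_im,
        Complex.ofReal_re, Complex.ofReal_im, Complex.I_re, Complex.I_im, hx0def, hy0def]
  have hlt : ‖Q18.eval z0‖ < x0^5 := by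
    have hn2 : ‖Q18.eval z0‖^2 < (x0^5)^2 := by
      rw [Complex.sq_norm, hev]
      rw [Complex.normSq_add_mul_I]
      rw [hx0def]
      norm_num
    have h5 : (0:ℝ) ≤ x0^5 := by positivity
    nlinarith [norm_nonneg (Q18.eval z0)]
  linarith

theorem stmt_18 :
    (∀ z : ℂ, 100 * z ^ 5 + 230 * z ^ 4 + 80 * z ^ 3 + 164 * z ^ 2 + 8 * z + 16 = 0 →
      z.re < 0) ∧
    ((6.4 : ℝ) * 6.62 > 4.66 * 8.96 ∧ (8.96 : ℝ) * 6.62 > 6.4 * 6.4 ∧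
      (8.96 : ℝ) * 6.4 > 6.62 * 6.17) ∧
    ¬ (∀ z : ℂ, 617 * z ^ 5 + 1472 * z ^ 4 + 716.8 * z ^ 3 + 1085.68 * z ^ 2 +
        51.2 * z + 74.56 = 0 → z.re < 0) :=
  ⟨part1, ⟨by norm_num, by norm_num, by norm_num⟩, part3⟩
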